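/- Let q, y ∈ ℂ with 0 < |q| < 1 and y ≠ 0, and define G(x) := Σ_{n≥0} (y;q)_n (q/y;q)_n (−x)^n / (q²;q²)_n for |x| < 1. Then G satisfies the q-difference equation (1 + x) G(x) = (x y + x q/y) G(x q) + (1 − x q) G(x q²) for all |x| < 1. -/

import Mathlib

/-- Finite q-Pochhammer symbol `(a;q)_n`. -/
noncomputable def poch (a q : ℂ) (n : ℕ) : ℂ := ∏ j ∈ Finset.range n, (1 - a * q ^ j)

/-- Infinite q-Pochhammer symbol `(a;q)_∞`. -/
noncomputable def pochInf (a q : ℂ) : ℂ := ∏' j : ℕ, (1 - a * q ^ j)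

/-- The universal mock theta function `g₂(x;q)`. -/
noncomputable def g2 (x q : ℂ) : ℂ :=
  ∑' n : ℕ, poch (-q) q n * q ^ (n * (n + 1) / 2) / (poch x q (n + 1) * poch (q / x) q (n + 1))

open Filter Topology

noncomputable def aCoef (q y : ℂ) (n : ℕ) : ℂ :=
  poch y q n * poch (q / y) q n / poch (q ^ 2) (q ^ 2) n

lemma poch_succ (a q : ℂ) (n : ℕ) : poch a q (n + 1) = poch a q n * (1 - a * q ^ n) :=
  Finset.prod_range_succ _ n

lemma factor_ne (q : ℂ) (hq1 : ‖q‖ < 1) (n : ℕ) : 1 - q ^ 2 * (q ^ 2) ^ n ≠ 0 := by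
  have h : ‖q ^ 2 * (q ^ 2) ^ n‖ < 1 := by
    rw [← pow_succ']
    calc ‖(q^2) ^ (n+1)‖ = ‖q‖ ^ (2 * (n+1)) := by
          rw [← pow_mul, norm_pow]
      _ ≤ ‖q‖ := by
          apply pow_le_of_le_one (norm_nonneg q) hq1.le; omega
      _ < 1 := hq1
  intro h0
  have : q ^ 2 * (q ^ 2) ^ n = 1 := by linear_combination -h0
  rw [this] at h; simp at h

lemma pochq2_ne (q : ℂ) (hq1 : ‖q‖ < 1) (n : ℕ) : poch (q ^ 2) (q ^ 2) n ≠ 0 := by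
  unfold poch
  rw [Finset.prod_ne_zero_iff]
  exact fun j _ => factor_ne q hq1 j

lemma aCoef_succ (q y : ℂ) (hq1 : ‖q‖ < 1) (n : ℕ) :
    aCoef q y (n + 1) =
      aCoef q y n * ((1 - y * q ^ n) * (1 - q / y * q ^ n) / (1 - q ^ 2 * (q ^ 2) ^ n)) := by
  unfold aCoef
  rw [poch_succ, poch_succ, poch_succ]
  field_simp [pochq2_ne q hq1 n, factor_ne q hq1 n]

lemma aCoef_rec (q y : ℂ) (hq1 : ‖q‖ < 1) (n : ℕ) :
    aCoef q y (n + 1) * (1 - q ^ 2 * (q ^ 2) ^ n) =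
      aCoef q y n * ((1 - y * q ^ n) * (1 - q / y * q ^ n)) := by
  rw [aCoef_succ q y hq1 n]
  field_simp [factor_ne q hq1 n]

lemma sumAux (q y : ℂ) (hq1 : ‖q‖ < 1) (s : ℂ) (hs : ‖s‖ < 1) :
    Summable (fun n => aCoef q y n * s ^ n) := by
  by_cases h0 : ∃ n, aCoef q y n * s ^ n = 0
  · obtain ⟨n₀, hn₀⟩ := h0
    apply summable_of_ne_finset_zero (s := Finset.range (n₀ + 1))
    intro m hm
    simp only [Finset.mem_range, not_lt] at hm
    rcases mul_eq_zero.mp hn₀ with h | h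
    · have hall : ∀ k, aCoef q y (n₀ + k) = 0 := by
        intro k
        induction k with
        | zero => simpa using h
        | succ k ih =>
            have := aCoef_rec q y hq1 (n₀ + k)
            rw [ih, zero_mul] at this
            have h2 := factor_ne q hq1 (n₀ + k)
            have : aCoef q y (n₀ + k + 1) = 0 := by
              rcases mul_eq_zero.mp this with h3 | h3
              · exact h3
              · exact absurd h3 h2
            exact this
      have : aCoef q y m = 0 := by
        have := hall (m - n₀)
        rwa [Nat.add_sub_cancel' (by omega)] at this
      simp [this]
    · have hs0 : s = 0 := pow_eq_zero_iff (by
        intro h'; rw [h'] at h; simp at h) |>.mp h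
      rw [hs0, zero_pow (by omega), mul_zero]
  · push_neg at h0
    set r : ℝ := (1 + ‖s‖) / 2 with hr
    have hr1 : r < 1 := by rw [hr]; linarith
    have hsr : ‖s‖ < r := by rw [hr]; linarith
    apply summable_of_ratio_norm_eventually_le hr1
    have hq2 : ‖(q : ℂ) ^ 2‖ < 1 := by
      rw [norm_pow]
      calc ‖q‖ ^ 2 ≤ ‖q‖ := pow_le_of_le_one (norm_nonneg q) hq1.le (by omega)
        _ < 1 := hq1
    have hqn : Tendsto (fun n : ℕ => q ^ n) atTop (𝓝 0) :=
      tendsto_pow_atTop_nhds_zero_of_norm_lt_one hq1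
    have hq2n : Tendsto (fun n : ℕ => (q ^ 2) ^ n) atTop (𝓝 0) :=
      tendsto_pow_atTop_nhds_zero_of_norm_lt_one hq2
    have hnum : Tendsto (fun n : ℕ => (1 - y * q ^ n) * (1 - q / y * q ^ n) /
        (1 - q ^ 2 * (q ^ 2) ^ n) * s) atTop (𝓝 s) := by
      have : Tendsto (fun n : ℕ => (1 - y * q ^ n) * (1 - q / y * q ^ n) /
          (1 - q ^ 2 * (q ^ 2) ^ n)) atTop (𝓝 1) := by
        have h1 : Tendsto (fun n : ℕ => (1 - y * q ^ n) * (1 - q / y * q ^ n)) atTop (𝓝 1) := by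
          have := ((tendsto_const_nhds (x := (1:ℂ))).sub (hqn.const_mul y)).mul
            ((tendsto_const_nhds (x := (1:ℂ))).sub (hqn.const_mul (q / y)))
          simpa using this
        have h2 : Tendsto (fun n : ℕ => 1 - q ^ 2 * (q ^ 2) ^ n) atTop (𝓝 1) := by
          have := (tendsto_const_nhds (x := (1:ℂ))).sub (hq2n.const_mul (q ^ 2))
          simpa using this
        simpa [Pi.div_def] using h1.div h2 (by norm_num)
      simpa using this.mul (tendsto_const_nhds (x := s))
    have hev : ∀ᶠ n in atTop, ‖(1 - y * q ^ n) * (1 - q / y * q ^ n) /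
        (1 - q ^ 2 * (q ^ 2) ^ n) * s‖ < r :=
      (hnum.norm).eventually_lt_const hsr
    filter_upwards [hev] with n hn
    have heq : aCoef q y (n + 1) * s ^ (n + 1) =
        ((1 - y * q ^ n) * (1 - q / y * q ^ n) / (1 - q ^ 2 * (q ^ 2) ^ n) * s) *
          (aCoef q y n * s ^ n) := by
      rw [aCoef_succ q y hq1 n, pow_succ]; ring
    rw [heq, norm_mul]
    exact mul_le_mul_of_nonneg_right hn.le (norm_nonneg _)

/-- Equation (2.2): the series `G` satisfies
`(1 + x) G(x) = (x y + x q/y) G(x q) + (1 − x q) G(x q²)`. -/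
theorem G_qdiff (q y : ℂ) (hq0 : 0 < ‖q‖) (hq1 : ‖q‖ < 1) (hy : y ≠ 0)
    (G : ℂ → ℂ)
    (hG : ∀ x : ℂ, ‖x‖ < 1 →
      G x = ∑' n : ℕ, poch y q n * poch (q / y) q n * (-x) ^ n / poch (q ^ 2) (q ^ 2) n) :
    ∀ x : ℂ, ‖x‖ < 1 →
      (1 + x) * G x = (x * y + x * q / y) * G (x * q) + (1 - x * q) * G (x * q ^ 2) := by
  intro x hx
  have hq2 : ‖(q : ℂ) ^ 2‖ < 1 := by
    rw [norm_pow]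
    calc ‖q‖ ^ 2 ≤ ‖q‖ := pow_le_of_le_one (norm_nonneg q) hq1.le (by omega)
      _ < 1 := hq1
  have hxq : ‖x * q‖ < 1 := by
    rw [norm_mul]
    calc ‖x‖ * ‖q‖ ≤ 1 * ‖q‖ := mul_le_mul_of_nonneg_right hx.le (norm_nonneg q)
      _ = ‖q‖ := one_mul _
      _ < 1 := hq1
  have hxq2 : ‖x * q ^ 2‖ < 1 := by
    rw [norm_mul]
    calc ‖x‖ * ‖q ^ 2‖ ≤ 1 * ‖q ^ 2‖ := mul_le_mul_of_nonneg_right hx.le (norm_nonneg _)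
      _ = ‖q ^ 2‖ := one_mul _
      _ < 1 := hq2
  have hterm : ∀ s : ℂ,
      (fun n : ℕ => poch y q n * poch (q / y) q n * (-s) ^ n / poch (q ^ 2) (q ^ 2) n)
        = fun n => aCoef q y n * (-s) ^ n := by
    intro s; funext n; unfold aCoef; ring
  rw [hG x hx, hG _ hxq, hG _ hxq2, hterm, hterm, hterm]
  set f : ℕ → ℂ := fun n => aCoef q y n * (-x) ^ n with hfdef
  set g : ℕ → ℂ := fun n => aCoef q y n * (-(x * q)) ^ n with hgdef
  set h : ℕ → ℂ := fun n => aCoef q y n * (-(x * q ^ 2)) ^ n with hhdef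
  have hf : Summable f := sumAux q y hq1 _ (by simpa using hx)
  have hg : Summable g := sumAux q y hq1 _ (by simpa using hxq)
  have hh : Summable h := sumAux q y hq1 _ (by simpa using hxq2)
  set v : ℕ → ℂ := fun n => aCoef q y n * (-x) ^ n * (1 - (q ^ 2) ^ n) with hvdef
  have ht : ∀ n : ℕ, (1 + x) * f n - ((x * y + x * q / y) * g n + (1 - x * q) * h n)
      = v n - v (n + 1) := by
    intro n
    have hrec := aCoef_rec q y hq1 n
    have hgn : g n = aCoef q y n * (-x) ^ n * q ^ n := by
      simp only [hgdef]
      rw [show -(x * q) = (-x) * q by ring, mul_pow]; ring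
    have hhn : h n = aCoef q y n * (-x) ^ n * (q ^ 2) ^ n := by
      simp only [hhdef]
      rw [show -(x * q ^ 2) = (-x) * q ^ 2 by ring, mul_pow]; ring
    have hq2n : (q ^ 2) ^ n = (q ^ n) ^ 2 := by rw [← pow_mul, ← pow_mul, mul_comm]
    simp only [hfdef, hgn, hhn, hvdef, pow_succ, hq2n]
    rw [hq2n] at hrec
    linear_combination (-(x * (-x) ^ n)) * hrec +
      (-(aCoef q y n * (-x) ^ n * x * q * (q ^ n) ^ 2)) * (mul_inv_cancel₀ hy)
  have hsumt : Summable (fun n => (1 + x) * f n -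
      ((x * y + x * q / y) * g n + (1 - x * q) * h n)) :=
    (hf.mul_left _).sub ((hg.mul_left _).add (hh.mul_left _))
  have hv0 : Tendsto v atTop (𝓝 0) := by
    have h1 : Tendsto f atTop (𝓝 0) := hf.tendsto_atTop_zero
    have h2 : Tendsto (fun n : ℕ => (q ^ 2) ^ n) atTop (𝓝 0) :=
      tendsto_pow_atTop_nhds_zero_of_norm_lt_one hq2
    have h3 : Tendsto (fun n => f n * (q ^ 2) ^ n) atTop (𝓝 0) := by
      simpa using h1.mul h2
    have := h1.sub h3
    simp only [sub_zero] at this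
    apply this.congr
    intro n
    simp only [hvdef, hfdef]; ring
  have hvzero : v 0 = 0 := by simp [hvdef]
  have hts : ∑' n, ((1 + x) * f n - ((x * y + x * q / y) * g n + (1 - x * q) * h n)) = 0 := by
    have hps : Tendsto (fun N => ∑ n ∈ Finset.range N,
        ((1 + x) * f n - ((x * y + x * q / y) * g n + (1 - x * q) * h n))) atTop (𝓝 0) := by
      have : ∀ N, ∑ n ∈ Finset.range N,
          ((1 + x) * f n - ((x * y + x * q / y) * g n + (1 - x * q) * h n)) = -v N := by
        intro N
        calc ∑ n ∈ Finset.range N,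
            ((1 + x) * f n - ((x * y + x * q / y) * g n + (1 - x * q) * h n))
            = ∑ n ∈ Finset.range N, (v n - v (n + 1)) :=
              Finset.sum_congr rfl (fun n _ => ht n)
          _ = v 0 - v N := Finset.sum_range_sub' v N
          _ = -v N := by rw [hvzero]; ring
      rw [funext this]
      simpa using hv0.neg
    have := hsumt.hasSum.tendsto_sum_nat
    exact tendsto_nhds_unique this hps
  have hsplit : ∑' n, ((1 + x) * f n - ((x * y + x * q / y) * g n + (1 - x * q) * h n))
      = (1 + x) * ∑' n, f n - ((x * y + x * q / y) * ∑' n, g n + (1 - x * q) * ∑' n, h n) := by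
    rw [Summable.tsum_sub (hf.mul_left _) ((hg.mul_left _).add (hh.mul_left _)),
      Summable.tsum_add (hg.mul_left _) (hh.mul_left _), tsum_mul_left, tsum_mul_left, tsum_mul_left]
  rw [hsplit] at hts
  linear_combination hts
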